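/- arXiv:1508.00187 — 2 statements merged into one kernel-verified Lean document; each statement's English description precedes it below -/
import Mathlib

section
/- Let P be a finite poset with d elements containing the 5-element poset X = {a, b, c, g, h} with relations a < c, b < c, c < g, c < h as a subposet. Then every vertex of the 1-skeleton of the order polytope O(P) has degree at least d + 1. -/
/-- Indicator vector of a subset `W` of `P` in `ℝ^P`. -/
noncomputable def rho {P : Type*} (W : Set P) : P → ℝ := W.indicator fun _ => 1

/-- The order polytope of a finite poset `P`. -/
def orderPolytope (P : Type*) [Fintype P] [PartialOrder P] : Set (P → ℝ) :=
  {f | (∀ i, 0 ≤ f i ∧ f i ≤ 1) ∧ ∀ i j : P, i ≤ j → f j ≤ f i}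

/-- The chain polytope of a finite poset `P`. -/
def chainPolytope (P : Type*) [Fintype P] [PartialOrder P] : Set (P → ℝ) :=
  {f | (∀ i, 0 ≤ f i) ∧ ∀ C : Finset P, IsMaxChain (· ≤ ·) (C : Set P) → ∑ i ∈ C, f i ≤ 1}

/-- A subset `S` of a poset `P` is connected in `P` if any two of its elements are
joined by a sequence within `S` whose consecutive members are comparable in `P`. -/
def ConnIn {P : Type*} [PartialOrder P] (S : Set P) : Prop :=
  ∀ x ∈ S, ∀ y ∈ S,
    Relation.ReflTransGen (fun u v => u ∈ S ∧ v ∈ S ∧ (u ≤ v ∨ v ≤ u)) x y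

/-- The segment joining `u` and `v` is an edge (one-dimensional face) of `S`. -/
def IsEdgeOf {E : Type*} [AddCommGroup E] [Module ℝ E] (S : Set E) (u v : E) : Prop :=
  u ≠ v ∧ IsExtreme ℝ S (segment ℝ u v)

/-- The set of maximal elements of a subset of a poset. -/
def maxSet {P : Type*} [PartialOrder P] (S : Set P) : Set P :=
  {x | x ∈ S ∧ ∀ y ∈ S, x ≤ y → x = y}

/-- The set of minimal elements of a subset of a poset. -/
def minSet {P : Type*} [PartialOrder P] (S : Set P) : Set P :=
  {x | x ∈ S ∧ ∀ y ∈ S, y ≤ x → x = y}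

/-- The 1-skeleton of the order polytope, combinatorially: vertices are poset
ideals, adjacency is proper inclusion with connected difference. -/
def orderSkeleton (P : Type*) [PartialOrder P] :
    SimpleGraph {I : Set P // IsLowerSet I} :=
  SimpleGraph.fromRel fun I J => I.1 ⊂ J.1 ∧ ConnIn (J.1 \ I.1)

/-- The 1-skeleton of the chain polytope, combinatorially: vertices are antichains,
adjacency is connectedness of the symmetric difference. -/
def chainSkeleton (P : Type*) [PartialOrder P] :
    SimpleGraph {A : Set P // IsAntichain (· ≤ ·) A} :=
  SimpleGraph.fromRel fun A B => ConnIn ((A.1 \ B.1) ∪ (B.1 \ A.1))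

/-- The multiset of vertex degrees of a graph (the degree sequence, up to order). -/
noncomputable def degMultiset {V : Type*} [Fintype V] (G : SimpleGraph V) : Multiset ℕ :=
  Finset.univ.val.map fun v => (G.neighborSet v).ncard

/-- `P` contains the poset `X = {a,b,c,g,h}` with `a<c, b<c, c<g, c<h` as a subposet. -/
def ContainsX (P : Type*) [PartialOrder P] : Prop :=
  ∃ a b c g h : P, a < c ∧ b < c ∧ c < g ∧ c < h ∧
    ¬ a ≤ b ∧ ¬ b ≤ a ∧ ¬ g ≤ h ∧ ¬ h ≤ g

/-- The pair `(I, J)` of poset ideals with `I ⊂ J` and `J \ I` connected in `P`. -/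
def OmegaP {P : Type*} [PartialOrder P] (I J : Set P) : Prop :=
  IsLowerSet I ∧ IsLowerSet J ∧ I ⊂ J ∧ ConnIn (J \ I)

/-- The pair `(A, B)` of distinct antichains with connected symmetric difference. -/
def PsiP {P : Type*} [PartialOrder P] (A B : Set P) : Prop :=
  IsAntichain (· ≤ ·) A ∧ IsAntichain (· ≤ ·) B ∧ A ≠ B ∧ ConnIn ((A \ B) ∪ (B \ A))

/-- First component of the map `Ω → Ψ`: `A = max J`. -/
def FmapA {P : Type*} [PartialOrder P] (_I J : Set P) : Set P := maxSet J

/-- Second component of the map `Ω → Ψ`: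
`B = min(J \ I) ∪ (max I ∩ max J)`, with `min(J \ I) := ∅` when `|J \ I| = 1`. -/
def FmapB {P : Type*} [PartialOrder P] (I J : Set P) : Set P :=
  (if (J \ I).ncard = 1 then ∅ else minSet (J \ I)) ∪ (maxSet I ∩ maxSet J)

noncomputable instance {P : Type*} [Fintype P] [PartialOrder P] :
    Fintype {I : Set P // IsLowerSet I} := Fintype.ofFinite _

noncomputable instance {P : Type*} [Fintype P] [PartialOrder P] :
    Fintype {A : Set P // IsAntichain (· ≤ ·) A} := Fintype.ofFinite _

section AuxStmt14

variable {P : Type*} [PartialOrder P]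

private lemma connIn_hub {S : Set P} {m : P} (_hm : m ∈ S)
    (H : ∀ x ∈ S, Relation.ReflTransGen
      (fun u v => u ∈ S ∧ v ∈ S ∧ (u ≤ v ∨ v ≤ u)) x m) : ConnIn S := by
  have hsymm : Symmetric (fun u v : P => u ∈ S ∧ v ∈ S ∧ (u ≤ v ∨ v ≤ u)) :=
    fun u v hv => ⟨hv.2.1, hv.1, hv.2.2.symm⟩
  intro x hx y hy
  exact (H x hx).trans ((@Relation.ReflTransGen.symmetric _ _ ⟨hsymm⟩).symm _ _ (H y hy))

private lemma adj_of_sub {I J : Set P} (hI : IsLowerSet I) (hJ : IsLowerSet J)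
    (hsub : J ⊂ I) (hconn : ConnIn (I \ J)) :
    (orderSkeleton P).Adj ⟨I, hI⟩ ⟨J, hJ⟩ := by
  rw [orderSkeleton, SimpleGraph.fromRel_adj]
  exact ⟨fun hEq => hsub.ne (congrArg Subtype.val hEq).symm, Or.inr ⟨hsub, hconn⟩⟩

private lemma adj_of_sup {I J : Set P} (hI : IsLowerSet I) (hJ : IsLowerSet J)
    (hsub : I ⊂ J) (hconn : ConnIn (J \ I)) :
    (orderSkeleton P).Adj ⟨I, hI⟩ ⟨J, hJ⟩ := by
  rw [orderSkeleton, SimpleGraph.fromRel_adj]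
  exact ⟨fun hEq => hsub.ne (congrArg Subtype.val hEq), Or.inl ⟨hsub, hconn⟩⟩

end AuxStmt14

theorem stmt14 {P : Type*} [Fintype P] [PartialOrder P] (hX : ContainsX P)
    (v : {I : Set P // IsLowerSet I}) :
    Fintype.card P + 1 ≤ ((orderSkeleton P).neighborSet v).ncard := by
  classical
  obtain ⟨a, b, c, g, h, hac, hbc, hcg, hch, hab, hba, hgh, hhg⟩ := hX
  obtain ⟨I, hI⟩ := v
  -- canonical neighbors, one for each element of P
  let J : P → Set P := fun p =>
    if p ∈ I then I \ {q | q ∈ I ∧ p ≤ q} else I ∪ {q | q ∉ I ∧ q ≤ p}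
  have hJ_in : ∀ p ∈ I, J p = I \ {q | q ∈ I ∧ p ≤ q} := fun p hp => if_pos hp
  have hJ_out : ∀ p ∉ I, J p = I ∪ {q | q ∉ I ∧ q ≤ p} := fun p hp => if_neg hp
  have hJlow : ∀ p, IsLowerSet (J p) := by
    intro p
    by_cases hp : p ∈ I
    · rw [hJ_in p hp]
      intro x y hxy hy
      exact ⟨hI hxy hy.1, fun hx => hy.2 ⟨hy.1, hx.2.trans hxy⟩⟩
    · rw [hJ_out p hp]
      intro x y hxy hy
      rcases hy with hy | hy
      · exact Or.inl (hI hxy hy)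
      · by_cases hyI : y ∈ I
        · exact Or.inl hyI
        · exact Or.inr ⟨hyI, hxy.trans hy.2⟩
  have hJadj : ∀ p, (orderSkeleton P).Adj ⟨I, hI⟩ ⟨J p, hJlow p⟩ := by
    intro p
    by_cases hp : p ∈ I
    · refine adj_of_sub hI (hJlow p) ?_ ?_
      · rw [hJ_in p hp]
        exact (Set.ssubset_iff_of_subset Set.diff_subset).2
          ⟨p, hp, fun hmem => hmem.2 ⟨hp, le_rfl⟩⟩
      · have hd : I \ J p = {q | q ∈ I ∧ p ≤ q} := by
          rw [hJ_in p hp]; ext x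
          simp only [Set.mem_diff, Set.mem_setOf_eq]
          tauto
        rw [hd]
        refine connIn_hub (m := p) ⟨hp, le_rfl⟩ ?_
        intro x hx
        exact Relation.ReflTransGen.single ⟨hx, ⟨hp, le_rfl⟩, Or.inr hx.2⟩
    · refine adj_of_sup hI (hJlow p) ?_ ?_
      · rw [hJ_out p hp]
        exact (Set.ssubset_iff_of_subset Set.subset_union_left).2
          ⟨p, Or.inr ⟨hp, le_rfl⟩, hp⟩
      · have hd : J p \ I = {q | q ∉ I ∧ q ≤ p} := by
          rw [hJ_out p hp]; ext x
          simp only [Set.mem_diff, Set.mem_union, Set.mem_setOf_eq]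
          tauto
        rw [hd]
        refine connIn_hub (m := p) ⟨hp, le_rfl⟩ ?_
        intro x hx
        exact Relation.ReflTransGen.single ⟨hx, ⟨hp, le_rfl⟩, Or.inl hx.2⟩
  -- elementary facts about the canonical neighbors
  have hJ_not_mem : ∀ p ∈ I, p ∉ J p := by
    intro p hp hmem
    rw [hJ_in p hp] at hmem
    exact hmem.2 ⟨hp, le_rfl⟩
  have hJ_sub : ∀ p ∈ I, J p ⊆ I := by
    intro p hp
    rw [hJ_in p hp]; exact Set.diff_subset
  have hJ_le : ∀ p ∈ I, ∀ q ∈ I, q ∉ J p → p ≤ q := by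
    intro p hp q hq hqJ
    rw [hJ_in p hp] at hqJ
    have hqT : q ∈ {q | q ∈ I ∧ p ≤ q} := by
      by_contra hT; exact hqJ ⟨hq, hT⟩
    exact hqT.2
  have hJ_mem : ∀ p ∉ I, p ∈ J p := by
    intro p hp
    rw [hJ_out p hp]; exact Or.inr ⟨hp, le_rfl⟩
  have hJ_ge : ∀ p ∉ I, ∀ q, q ∈ J p → q ∉ I → q ≤ p := by
    intro p hp q hqJ hq
    rw [hJ_out p hp] at hqJ
    rcases hqJ with hqJ | hqJ
    · exact absurd hqJ hq
    · exact hqJ.2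
  have hJinj : ∀ p q : P, J p = J q → p = q := by
    intro p q hEq
    by_cases hp : p ∈ I <;> by_cases hq : q ∈ I
    · have hqp : q ∉ J p := by rw [hEq]; exact hJ_not_mem q hq
      have hpq : p ∉ J q := by rw [← hEq]; exact hJ_not_mem p hp
      exact le_antisymm (hJ_le p hp q hq hqp) (hJ_le q hq p hp hpq)
    · have hqm : q ∈ J p := by rw [hEq]; exact hJ_mem q hq
      exact absurd (hJ_sub p hp hqm) hq
    · have hpm : p ∈ J q := by rw [← hEq]; exact hJ_mem p hp
      exact absurd (hJ_sub q hq hpm) hp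
    · have hpm : p ∈ J q := by rw [← hEq]; exact hJ_mem p hp
      have hqm : q ∈ J p := by rw [hEq]; exact hJ_mem q hq
      exact le_antisymm (hJ_ge q hq p hpm hp) (hJ_ge p hp q hqm hq)
  -- the extra neighbor coming from the subposet X
  have key : ∃ E : {I : Set P // IsLowerSet I},
      (orderSkeleton P).Adj ⟨I, hI⟩ E ∧ ∀ p, E.1 ≠ J p := by
    by_cases hc : c ∈ I
    · have haI : a ∈ I := hI hac.le hc
      have hbI : b ∈ I := hI hbc.le hc
      set T : Set P := {q | q ∈ I ∧ a ≤ q} ∪ {q | q ∈ I ∧ b ≤ q} with hT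
      have hElow : IsLowerSet (I \ T) := by
        intro x y hxy hy
        refine ⟨hI hxy hy.1, fun hx => hy.2 ?_⟩
        rcases hx with hx | hx
        · exact Or.inl ⟨hy.1, hx.2.trans hxy⟩
        · exact Or.inr ⟨hy.1, hx.2.trans hxy⟩
      refine ⟨⟨I \ T, hElow⟩, ?_, ?_⟩
      · refine adj_of_sub hI hElow ?_ ?_
        · exact (Set.ssubset_iff_of_subset Set.diff_subset).2
            ⟨a, haI, fun hmem => hmem.2 (Or.inl ⟨haI, le_rfl⟩)⟩
        · have hd : I \ (I \ T) = T := by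
            ext x
            simp only [hT, Set.mem_diff, Set.mem_union, Set.mem_setOf_eq]
            tauto
          rw [hd]
          have hcT : c ∈ T := Or.inl ⟨hc, hac.le⟩
          have haT : a ∈ T := Or.inl ⟨haI, le_rfl⟩
          have hbT : b ∈ T := Or.inr ⟨hbI, le_rfl⟩
          refine connIn_hub (m := c) hcT ?_
          intro x hx
          rcases hx with hx | hx
          · exact Relation.ReflTransGen.head ⟨Or.inl hx, haT, Or.inr hx.2⟩
              (Relation.ReflTransGen.single ⟨haT, hcT, Or.inl hac.le⟩)
          · exact Relation.ReflTransGen.head ⟨Or.inr hx, hbT, Or.inr hx.2⟩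
              (Relation.ReflTransGen.single ⟨hbT, hcT, Or.inl hbc.le⟩)
      · intro p hEq
        have hEq' : I \ T = J p := hEq
        by_cases hp : p ∈ I
        · have haE : a ∉ I \ T := fun hmem => hmem.2 (Or.inl ⟨haI, le_rfl⟩)
          have hbE : b ∉ I \ T := fun hmem => hmem.2 (Or.inr ⟨hbI, le_rfl⟩)
          rw [hEq'] at haE hbE
          have hpa : p ≤ a := hJ_le p hp a haI haE
          have hpb : p ≤ b := hJ_le p hp b hbI hbE
          have hpE : p ∉ I \ T := by rw [hEq']; exact hJ_not_mem p hp
          have hpT : p ∈ T := by by_contra hT'; exact hpE ⟨hp, hT'⟩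
          rcases hpT with hx | hx
          · exact hab (hx.2.trans hpb)
          · exact hba (hx.2.trans hpa)
        · have hpm : p ∈ I \ T := by rw [hEq']; exact hJ_mem p hp
          exact hp hpm.1
    · have hgI : g ∉ I := fun hg => hc (hI hcg.le hg)
      have hhI : h ∉ I := fun hh => hc (hI hch.le hh)
      set U : Set P := {q | q ∉ I ∧ (q ≤ g ∨ q ≤ h)} with hU
      have hElow : IsLowerSet (I ∪ U) := by
        intro x y hxy hy
        rcases hy with hy | hy
        · exact Or.inl (hI hxy hy)
        · by_cases hyI : y ∈ I
          · exact Or.inl hyI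
          · refine Or.inr ⟨hyI, ?_⟩
            rcases hy.2 with h' | h'
            · exact Or.inl (hxy.trans h')
            · exact Or.inr (hxy.trans h')
      have hgU : g ∈ U := ⟨hgI, Or.inl le_rfl⟩
      have hhU : h ∈ U := ⟨hhI, Or.inr le_rfl⟩
      have hcU : c ∈ U := ⟨hc, Or.inl hcg.le⟩
      refine ⟨⟨I ∪ U, hElow⟩, ?_, ?_⟩
      · refine adj_of_sup hI hElow ?_ ?_
        · exact (Set.ssubset_iff_of_subset Set.subset_union_left).2
            ⟨g, Or.inr hgU, hgI⟩
        · have hd : (I ∪ U) \ I = U := by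
            ext x
            simp only [hU, Set.mem_diff, Set.mem_union, Set.mem_setOf_eq]
            tauto
          rw [hd]
          refine connIn_hub (m := c) hcU ?_
          intro x hx
          rcases hx.2 with h' | h'
          · exact Relation.ReflTransGen.head ⟨hx, hgU, Or.inl h'⟩
              (Relation.ReflTransGen.single ⟨hgU, hcU, Or.inr hcg.le⟩)
          · exact Relation.ReflTransGen.head ⟨hx, hhU, Or.inl h'⟩
              (Relation.ReflTransGen.single ⟨hhU, hcU, Or.inr hch.le⟩)
      · intro p hEq
        have hEq' : I ∪ U = J p := hEq
        by_cases hp : p ∈ I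
        · have hcm : c ∈ J p := by rw [← hEq']; exact Or.inr hcU
          exact hc (hJ_sub p hp hcm)
        · have hgm : g ∈ J p := by rw [← hEq']; exact Or.inr hgU
          have hhm : h ∈ J p := by rw [← hEq']; exact Or.inr hhU
          have hgp : g ≤ p := hJ_ge p hp g hgm hgI
          have hhp : h ≤ p := hJ_ge p hp h hhm hhI
          have hpm : p ∈ I ∪ U := by rw [hEq']; exact hJ_mem p hp
          rcases hpm with hpm | hpm
          · exact hp hpm
          · rcases hpm.2 with h' | h'
            · exact hhg (hhp.trans h')
            · exact hgh (hgp.trans h')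
  -- count the neighbors
  obtain ⟨E, hEadj, hEne⟩ := key
  let F : Option P → {I : Set P // IsLowerSet I} :=
    fun o => o.elim E (fun p => ⟨J p, hJlow p⟩)
  have hFinj : Function.Injective F := by
    intro o o' hEq
    match o, o' with
    | none, none => rfl
    | none, some p => exact absurd (congrArg Subtype.val hEq) (hEne p)
    | some p, none => exact absurd (congrArg Subtype.val hEq).symm (hEne p)
    | some p, some q => exact congrArg some (hJinj p q (congrArg Subtype.val hEq))
  have hFmem : ∀ o, F o ∈ (orderSkeleton P).neighborSet ⟨I, hI⟩ := by
    intro o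
    match o with
    | none => exact hEadj
    | some p => exact hJadj p
  calc Fintype.card P + 1 = Nat.card (Option P) := by
        simp [Nat.card_eq_fintype_card]
    _ = Nat.card (Set.range F) := (Nat.card_range_of_injective hFinj).symm
    _ = (Set.range F).ncard := Nat.card_coe_set_eq _
    _ ≤ ((orderSkeleton P).neighborSet ⟨I, hI⟩).ncard :=
        Set.ncard_le_ncard (by rintro x ⟨o, rfl⟩; exact hFmem o) (Set.toFinite _)
end

section
/- Let P be a finite poset and suppose the poset X (five elements a,b,c,g,h with a<c, b<c, c<g, c<h) does not appear as a subposet of P. Then the degree sequence of the 1-skeleton of O(P) equals that of the 1-skeleton of C(P). -/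
set_option linter.unusedVariables false

namespace HLwork

variable {P : Type*} [PartialOrder P]

/-- elements whose strict downset is a chain -/
def Dset (P : Type*) [PartialOrder P] : Set P := {x | IsChain (· ≤ ·) {y | y < x}}

lemma Dset_lower : IsLowerSet (Dset P) := by
  intro x y hyx hx
  intro a ha b hb hab
  exact hx (lt_of_lt_of_le ha hyx) (lt_of_lt_of_le hb hyx) hab

lemma chain_up (hX : ¬ ContainsX P) {x : P} (hx : x ∉ Dset P) :
    IsChain (· ≤ ·) {y | x < y} := by
  by_contra hc
  simp only [Dset, Set.mem_setOf_eq, IsChain, Set.Pairwise] at hx hc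
  push_neg at hx hc
  obtain ⟨a, ha, b, hb, hab, hab1, hab2⟩ := hx
  obtain ⟨g, hg, h, hh, hgh, hgh1, hgh2⟩ := hc
  exact hX ⟨a, b, x, g, h, ha, hb, hg, hh, hab1, hab2, hgh1, hgh2⟩

section Fin
variable [Fintype P]

lemma exists_max_of_mem {Q : Set P} {x : P} (hx : x ∈ Q) :
    ∃ m, m ∈ Q ∧ x ≤ m ∧ ∀ y ∈ Q, m ≤ y → m = y := by
  obtain ⟨m, hm, hmax⟩ := Set.Finite.exists_maximalFor id {y ∈ Q | x ≤ y}
    (Set.toFinite _) ⟨x, hx, le_refl x⟩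
  exact ⟨m, hm.1, hm.2, fun y hy hmy => le_antisymm hmy (hmax ⟨hy, hm.2.trans hmy⟩ hmy)⟩

lemma exists_min_of_mem {Q : Set P} {x : P} (hx : x ∈ Q) :
    ∃ m, m ∈ Q ∧ m ≤ x ∧ ∀ y ∈ Q, y ≤ m → m = y := by
  obtain ⟨m, hm, hmax⟩ := Set.Finite.exists_maximalFor (OrderDual.toDual)
    {y ∈ Q | y ≤ x} (Set.toFinite _) ⟨x, hx, le_refl x⟩
  exact ⟨m, hm.1, hm.2, fun y hy hmy => le_antisymm (hmax ⟨hy, hmy.trans hm.2⟩ hmy) hmy⟩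

end Fin

/-- the transfer-like map from lower sets to antichains -/
def phi (I : Set P) : Set P := (minSet Iᶜ ∩ Dset P) ∪ (maxSet I \ Dset P)

/-- the inverse map from antichains to lower sets -/
def psi (A : Set P) : Set P :=
  {x | (x ∈ Dset P ∧ ∀ a ∈ A, a ∈ Dset P → ¬ a ≤ x) ∨
       (x ∉ Dset P ∧ ∃ a ∈ A, a ∉ Dset P ∧ x ≤ a)}

lemma mem_psi_of_D {A : Set P} {x : P} (hx : x ∈ Dset P) :
    x ∈ psi A ↔ ∀ a ∈ A, a ∈ Dset P → ¬ a ≤ x := by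
  simp only [psi, Set.mem_setOf_eq]
  exact ⟨fun h => h.elim (fun h => h.2) (fun h => absurd hx h.1),
    fun h => Or.inl ⟨hx, h⟩⟩

lemma mem_psi_of_nD {A : Set P} {x : P} (hx : x ∉ Dset P) :
    x ∈ psi A ↔ ∃ a ∈ A, a ∉ Dset P ∧ x ≤ a := by
  simp only [psi, Set.mem_setOf_eq]
  exact ⟨fun h => h.elim (fun h => absurd h.1 hx) (fun h => h.2),
    fun h => Or.inr ⟨hx, h⟩⟩

lemma antichain_phi {I : Set P} (_hI : IsLowerSet I) (hI' : IsLowerSet I) :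
    IsAntichain (· ≤ ·) (phi I) := by
  rintro u hu v hv huv hle
  rcases hu with ⟨hu1, huD⟩ | ⟨hu1, huD⟩ <;> rcases hv with ⟨hv1, hvD⟩ | ⟨hv1, hvD⟩
  · exact huv (hv1.2 u hu1.1 hle).symm
  · -- u ∈ minSet Iᶜ ∩ D, v ∈ maxSet I \ D : u ≤ v, u ∉ I, v ∈ I
    exact hu1.1 (hI' hle hv1.1)
  · -- u ∈ maxSet I \ D, v ∈ minSet Iᶜ ∩ D : u < v, u ∉ D but v ∈ D
    have hlt : u < v := lt_of_le_of_ne hle huv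
    simp only [Dset, Set.mem_setOf_eq, IsChain, Set.Pairwise] at huD
    push_neg at huD
    obtain ⟨a, ha, b, hb, hab, h1, h2⟩ := huD
    rcases hvD (ha.trans hlt) (hb.trans hlt) hab with h | h
    · exact h1 h
    · exact h2 h
  · exact huv (hu1.2 v hv1.1 hle)

lemma lower_psi {A : Set P} (hA : IsAntichain (· ≤ ·) A) : IsLowerSet (psi A) := by
  intro x y hyx hx
  by_cases hyD : y ∈ Dset P
  · rw [mem_psi_of_D hyD]
    intro a haA haD hay
    by_cases hxD : x ∈ Dset P
    · exact (mem_psi_of_D hxD).1 hx a haA haD (hay.trans hyx)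
    · obtain ⟨b, hbA, hbD, hxb⟩ := (mem_psi_of_nD hxD).1 hx
      have hab : a ≤ b := (hay.trans hyx).trans hxb
      have : a = b := hA.eq haA hbA hab
      exact hbD (this ▸ haD)
  · have hxD : x ∉ Dset P := fun h => hyD (Dset_lower hyx h)
    rw [mem_psi_of_nD hyD]
    obtain ⟨b, hbA, hbD, hxb⟩ := (mem_psi_of_nD hxD).1 hx
    exact ⟨b, hbA, hbD, hyx.trans hxb⟩


lemma mem_phi_of_D {I : Set P} {x : P} (hx : x ∈ Dset P) :
    x ∈ phi I ↔ x ∈ minSet Iᶜ := by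
  simp only [phi, Set.mem_union, Set.mem_inter_iff, Set.mem_diff]
  exact ⟨fun h => h.elim (fun h => h.1) (fun h => absurd hx h.2),
    fun h => Or.inl ⟨h, hx⟩⟩

lemma mem_phi_of_nD {I : Set P} {x : P} (hx : x ∉ Dset P) :
    x ∈ phi I ↔ x ∈ maxSet I := by
  simp only [phi, Set.mem_union, Set.mem_inter_iff, Set.mem_diff]
  exact ⟨fun h => h.elim (fun h => absurd h.2 hx) (fun h => h.1),
    fun h => Or.inr ⟨h, hx⟩⟩

lemma phi_psi {A : Set P} (hA : IsAntichain (· ≤ ·) A) : phi (psi A) = A := by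
  ext x
  by_cases hxD : x ∈ Dset P
  · rw [mem_phi_of_D hxD]
    constructor
    · rintro ⟨hxI, hmin⟩
      rw [Set.mem_compl_iff, mem_psi_of_D hxD] at hxI
      push_neg at hxI
      obtain ⟨a, haA, haD, hax⟩ := hxI
      have haI : a ∈ (psi A)ᶜ := by
        rw [Set.mem_compl_iff, mem_psi_of_D haD]
        push_neg
        exact ⟨a, haA, haD, le_refl a⟩
      exact (hmin a haI hax) ▸ haA
    · intro hxA
      have hxI : x ∈ (psi A)ᶜ := by
        rw [Set.mem_compl_iff, mem_psi_of_D hxD]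
        push_neg
        exact ⟨x, hxA, hxD, le_refl x⟩
      refine ⟨hxI, fun y hy hyx => ?_⟩
      have hyD : y ∈ Dset P := Dset_lower hyx hxD
      rw [Set.mem_compl_iff, mem_psi_of_D hyD] at hy
      push_neg at hy
      obtain ⟨b, hbA, hbD, hby⟩ := hy
      have hbx : b = x := hA.eq hbA hxA (hby.trans hyx)
      exact le_antisymm (hbx ▸ hby) hyx
  · rw [mem_phi_of_nD hxD]
    constructor
    · rintro ⟨hxI, hmax⟩
      rw [mem_psi_of_nD hxD] at hxI
      obtain ⟨a, haA, haD, hxa⟩ := hxI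
      have haI : a ∈ psi A := by
        rw [mem_psi_of_nD haD]
        exact ⟨a, haA, haD, le_refl a⟩
      exact (hmax a haI hxa) ▸ haA
    · intro hxA
      have hxI : x ∈ psi A := by
        rw [mem_psi_of_nD hxD]
        exact ⟨x, hxA, hxD, le_refl x⟩
      refine ⟨hxI, fun y hy hxy => ?_⟩
      have hyD : y ∉ Dset P := fun h => hxD (Dset_lower hxy h)
      rw [mem_psi_of_nD hyD] at hy
      obtain ⟨b, hbA, hbD, hyb⟩ := hy
      have hbx : x = b := hA.eq hxA hbA (hxy.trans hyb)
      exact le_antisymm hxy (hbx ▸ hyb)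

variable [Fintype P]

lemma psi_phi {I : Set P} (hI : IsLowerSet I) : psi (phi I) = I := by
  ext x
  by_cases hxD : x ∈ Dset P
  · rw [mem_psi_of_D hxD]
    constructor
    · intro h
      by_contra hxI
      obtain ⟨a, haI, hax, hmin⟩ := exists_min_of_mem (Q := Iᶜ) hxI
      have haD : a ∈ Dset P := Dset_lower hax hxD
      exact h a ((mem_phi_of_D haD).2 ⟨haI, fun y hy hya => hmin y hy hya⟩) haD hax
    · intro hxI a haA haD hax
      have := ((mem_phi_of_D haD).1 haA).1
      exact this (hI hax hxI)
  · rw [mem_psi_of_nD hxD]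
    constructor
    · rintro ⟨a, haA, haD, hxa⟩
      exact hI hxa ((mem_phi_of_nD haD).1 haA).1
    · intro hxI
      obtain ⟨m, hmI, hxm, hmax⟩ := exists_max_of_mem (Q := I) hxI
      have hmD : m ∉ Dset P := fun h => hxD (Dset_lower hxm h)
      exact ⟨m, (mem_phi_of_nD hmD).2 ⟨hmI, fun y hy hmy => hmax y hy hmy⟩, hmD, hxm⟩


omit [Fintype P] in
lemma crossing {I J : Set P} (hI : IsLowerSet I) (hJ : IsLowerSet J)
    (hC : ConnIn (I \ J ∪ J \ I)) : I ⊆ J ∨ J ⊆ I := by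
  by_contra hcon
  push_neg at hcon
  rw [Set.not_subset, Set.not_subset] at hcon
  obtain ⟨⟨x, hxI, hxJ⟩, ⟨y, hyJ, hyI⟩⟩ := hcon
  have hpath := hC x (Or.inl ⟨hxI, hxJ⟩) y (Or.inr ⟨hyJ, hyI⟩)
  have key : ∀ z, Relation.ReflTransGen
      (fun u v => u ∈ I \ J ∪ J \ I ∧ v ∈ I \ J ∪ J \ I ∧ (u ≤ v ∨ v ≤ u)) x z →
      z ∈ I \ J := by
    intro z hz
    induction hz with
    | refl => exact ⟨hxI, hxJ⟩
    | tail _ h₂ ih =>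
      obtain ⟨_, hc, hcomp⟩ := h₂
      rcases hc with hc | hc
      · exact hc
      · rcases hcomp with hle | hle
        · exact absurd (hJ hle hc.1) ih.2
        · exact absurd (hI hle ih.1) hc.2
  exact (key y hpath).2 hyJ

omit [Fintype P] in
lemma rho_comp (hX : ¬ ContainsX P) {b c m m' : P} (hbc : b ≤ c)
    (hm : (b ∈ Dset P ∧ m ≤ b) ∨ (b ∉ Dset P ∧ b ≤ m))
    (hm' : (c ∈ Dset P ∧ m' ≤ c) ∨ (c ∉ Dset P ∧ c ≤ m')) :
    m ≤ m' ∨ m' ≤ m := by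
  rcases hm with ⟨hbD, hmb⟩ | ⟨hbD, hbm⟩ <;> rcases hm' with ⟨hcD, hm'c⟩ | ⟨hcD, hcm'⟩
  · -- m ≤ b ≤ c, m' ≤ c, c ∈ D
    rcases eq_or_lt_of_le (hmb.trans hbc) with hmc | hmc
    · exact Or.inr (hm'c.trans hmc.ge)
    · rcases eq_or_lt_of_le hm'c with hm'c2 | hm'c2
      · exact Or.inl (hmc.le.trans hm'c2.ge)
      · rcases eq_or_ne m m' with he | hne
        · exact Or.inl he.le
        · exact hcD hmc hm'c2 hne
  · exact Or.inl ((hmb.trans hbc).trans hcm')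
  · exact absurd (Dset_lower hbc hcD) hbD
  · -- b ≤ m, b ≤ c ≤ m', b ∉ D
    rcases eq_or_lt_of_le hbm with hbm2 | hbm2
    · exact Or.inl (hbm2 ▸ (hbc.trans hcm'))
    · rcases eq_or_lt_of_le (hbc.trans hcm') with hbm'2 | hbm'2
      · exact Or.inr (hbm'2 ▸ hbm2.le)
      · rcases eq_or_ne m m' with he | hne
        · exact Or.inl he.le
        · exact chain_up hX hbD hbm2 hbm'2 hne

omit [Fintype P] in
lemma transport (hX : ¬ ContainsX P) {PathS Img : Set P}
    (rho_ex : ∀ t ∈ PathS, ∃ s, s ∈ Img ∧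
      ((t ∈ Dset P ∧ s ≤ t) ∨ (t ∉ Dset P ∧ t ≤ s)))
    {t t' : P}
    (h : Relation.ReflTransGen
      (fun u v => u ∈ PathS ∧ v ∈ PathS ∧ (u ≤ v ∨ v ≤ u)) t t')
    {s : P} (hs : s ∈ Img ∧ ((t ∈ Dset P ∧ s ≤ t) ∨ (t ∉ Dset P ∧ t ≤ s))) :
    ∀ s', s' ∈ Img ∧ ((t' ∈ Dset P ∧ s' ≤ t') ∨ (t' ∉ Dset P ∧ t' ≤ s')) →
    Relation.ReflTransGen
      (fun u v => u ∈ Img ∧ v ∈ Img ∧ (u ≤ v ∨ v ≤ u)) s s' := by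
  induction h with
  | refl =>
    intro s' hs'
    exact Relation.ReflTransGen.single ⟨hs.1, hs'.1, rho_comp hX (le_refl t) hs.2 hs'.2⟩
  | @tail b c h₁ h₂ ih =>
    intro s'' hs''
    obtain ⟨sb, hsb⟩ := rho_ex b h₂.1
    refine Relation.ReflTransGen.tail (ih sb hsb) ⟨hsb.1, hs''.1, ?_⟩
    rcases h₂.2.2 with hle | hle
    · exact rho_comp hX hle hsb.2 hs''.2
    · exact (rho_comp hX hle hs''.2 hsb.2).symm

omit [Fintype P] in
lemma rho_ex_half {A B : Set P} (hA : IsAntichain (· ≤ ·) A) {t : P}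
    (htA : t ∈ A) (htB : t ∉ B) :
    ∃ s, ((s ∈ psi A ∧ s ∉ psi B) ∨ (s ∈ psi B ∧ s ∉ psi A)) ∧
      ((t ∈ Dset P ∧ s ≤ t) ∨ (t ∉ Dset P ∧ t ≤ s)) := by
  by_cases htD : t ∈ Dset P
  · have htpA : t ∉ psi A := by
      rw [mem_psi_of_D htD]; push_neg; exact ⟨t, htA, htD, le_refl t⟩
    by_cases htpB : t ∈ psi B
    · exact ⟨t, Or.inr ⟨htpB, htpA⟩, Or.inl ⟨htD, le_refl t⟩⟩
    · rw [mem_psi_of_D htD] at htpB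
      push_neg at htpB
      obtain ⟨b, hbB, hbD, hbt⟩ := htpB
      have hbpB : b ∉ psi B := by
        rw [mem_psi_of_D hbD]; push_neg; exact ⟨b, hbB, hbD, le_refl b⟩
      have hbpA : b ∈ psi A := by
        rw [mem_psi_of_D hbD]
        intro a haA haD hab
        have hat : a = t := hA.eq haA htA (hab.trans hbt)
        subst hat
        exact htB (le_antisymm hbt hab ▸ hbB)
      exact ⟨b, Or.inl ⟨hbpA, hbpB⟩, Or.inl ⟨htD, hbt⟩⟩
  · have htpA : t ∈ psi A := (mem_psi_of_nD htD).2 ⟨t, htA, htD, le_refl t⟩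
    by_cases htpB : t ∈ psi B
    · obtain ⟨b, hbB, hbD, htb⟩ := (mem_psi_of_nD htD).1 htpB
      have hbpB : b ∈ psi B := (mem_psi_of_nD hbD).2 ⟨b, hbB, hbD, le_refl b⟩
      have hbpA : b ∉ psi A := by
        rw [mem_psi_of_nD hbD]
        rintro ⟨a, haA, haD, hba⟩
        have hat : t = a := hA.eq htA haA (htb.trans hba)
        subst hat
        exact htB (le_antisymm hba htb ▸ hbB)
      exact ⟨b, Or.inr ⟨hbpB, hbpA⟩, Or.inr ⟨htD, htb⟩⟩
    · exact ⟨t, Or.inl ⟨htpA, htpB⟩, Or.inr ⟨htD, le_refl t⟩⟩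

omit [Fintype P] in
lemma anchor_half {A B : Set P} {s : P} (hspA : s ∈ psi A) (hspB : s ∉ psi B) :
    ∃ a, ((a ∈ psi A ∧ a ∉ psi B) ∨ (a ∈ psi B ∧ a ∉ psi A)) ∧
      ((a ∈ A ∧ a ∉ B) ∨ (a ∈ B ∧ a ∉ A)) ∧ (s ≤ a ∨ a ≤ s) := by
  by_cases hsD : s ∈ Dset P
  · have hs' := (mem_psi_of_D hsD).1 hspA
    rw [mem_psi_of_D hsD] at hspB
    push_neg at hspB
    obtain ⟨b, hbB, hbD, hbs⟩ := hspB
    have hbpB : b ∉ psi B := by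
      rw [mem_psi_of_D hbD]; push_neg; exact ⟨b, hbB, hbD, le_refl b⟩
    have hbpA : b ∈ psi A := by
      rw [mem_psi_of_D hbD]
      intro a haA haD hab
      exact hs' a haA haD (hab.trans hbs)
    have hbA : b ∉ A := fun hbA => hs' b hbA hbD hbs
    exact ⟨b, Or.inl ⟨hbpA, hbpB⟩, Or.inr ⟨hbB, hbA⟩, Or.inr hbs⟩
  · obtain ⟨a, haA, haD, hsa⟩ := (mem_psi_of_nD hsD).1 hspA
    have hapA : a ∈ psi A := (mem_psi_of_nD haD).2 ⟨a, haA, haD, le_refl a⟩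
    have hapB : a ∉ psi B := by
      rw [mem_psi_of_nD haD]
      rintro ⟨b, hbB, hbD, hab⟩
      exact hspB ((mem_psi_of_nD hsD).2 ⟨b, hbB, hbD, hsa.trans hab⟩)
    have haB : a ∉ B := fun haB =>
      hspB ((mem_psi_of_nD hsD).2 ⟨a, haB, haD, hsa⟩)
    exact ⟨a, Or.inl ⟨hapA, hapB⟩, Or.inl ⟨haA, haB⟩, Or.inl hsa⟩

omit [Fintype P] in
lemma dir2 (hX : ¬ ContainsX P) {A B : Set P} (hA : IsAntichain (· ≤ ·) A)
    (hB : IsAntichain (· ≤ ·) B) (hT : ConnIn (A \ B ∪ B \ A)) :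
    ConnIn (psi A \ psi B ∪ psi B \ psi A) := by
  set S : Set P := psi A \ psi B ∪ psi B \ psi A with hSdef
  have hSmem : ∀ {s : P}, ((s ∈ psi A ∧ s ∉ psi B) ∨ (s ∈ psi B ∧ s ∉ psi A)) → s ∈ S := by
    intro s h
    simp only [hSdef, Set.mem_union, Set.mem_diff]
    exact h
  have rho_full : ∀ t ∈ A \ B ∪ B \ A, ∃ s, s ∈ S ∧
      ((t ∈ Dset P ∧ s ≤ t) ∨ (t ∉ Dset P ∧ t ≤ s)) := by
    rintro t (⟨ht1, ht2⟩ | ⟨ht1, ht2⟩)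
    · obtain ⟨s, h1, h2⟩ := rho_ex_half hA ht1 ht2
      exact ⟨s, hSmem h1, h2⟩
    · obtain ⟨s, h1, h2⟩ := rho_ex_half hB ht1 ht2
      exact ⟨s, hSmem h1.symm, h2⟩
  intro x hx y hy
  have anchor : ∀ z ∈ S, ∃ a, a ∈ S ∧ a ∈ A \ B ∪ B \ A ∧ (z ≤ a ∨ a ≤ z) := by
    rintro z (⟨hz1, hz2⟩ | ⟨hz1, hz2⟩)
    · obtain ⟨a, h1, h2, h3⟩ := anchor_half hz1 hz2
      refine ⟨a, hSmem h1, ?_, h3⟩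
      rcases h2 with h2 | h2
      · exact Or.inl h2
      · exact Or.inr h2
    · obtain ⟨a, h1, h2, h3⟩ := anchor_half hz1 hz2
      refine ⟨a, hSmem h1.symm, ?_, h3⟩
      rcases h2 with h2 | h2
      · exact Or.inr h2
      · exact Or.inl h2
  obtain ⟨ax, haxS, haxT, haxc⟩ := anchor x hx
  obtain ⟨ay, hayS, hayT, hayc⟩ := anchor y hy
  obtain ⟨sx, hsxS, hsxc⟩ := rho_full ax haxT
  obtain ⟨sy, hsyS, hsyc⟩ := rho_full ay hayT
  have hpath := hT ax haxT ay hayT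
  have hmid := transport hX rho_full hpath ⟨hsxS, hsxc⟩ sy ⟨hsyS, hsyc⟩
  have hc1 : x ≤ ax ∨ ax ≤ x := haxc
  have e1 : Relation.ReflTransGen (fun u v => u ∈ S ∧ v ∈ S ∧ (u ≤ v ∨ v ≤ u)) x ax :=
    Relation.ReflTransGen.single ⟨hx, haxS, hc1⟩
  have e2 : Relation.ReflTransGen (fun u v => u ∈ S ∧ v ∈ S ∧ (u ≤ v ∨ v ≤ u)) ax sx := by
    refine Relation.ReflTransGen.single ⟨haxS, hsxS, ?_⟩
    rcases hsxc with ⟨_, h⟩ | ⟨_, h⟩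
    · exact Or.inr h
    · exact Or.inl h
  have e3 : Relation.ReflTransGen (fun u v => u ∈ S ∧ v ∈ S ∧ (u ≤ v ∨ v ≤ u)) sy ay := by
    refine Relation.ReflTransGen.single ⟨hsyS, hayS, ?_⟩
    rcases hsyc with ⟨_, h⟩ | ⟨_, h⟩
    · exact Or.inl h
    · exact Or.inr h
  have e4 : Relation.ReflTransGen (fun u v => u ∈ S ∧ v ∈ S ∧ (u ≤ v ∨ v ≤ u)) ay y :=
    Relation.ReflTransGen.single ⟨hayS, hy, hayc.symm⟩
  exact ((e1.trans e2).trans hmid).trans (e3.trans e4)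

lemma rho'_ex {I J : Set P} (hI : IsLowerSet I) (hJ : IsLowerSet J) (hIJ : I ⊆ J) :
    ∀ s ∈ J \ I, ∃ m, m ∈ phi I \ phi J ∪ phi J \ phi I ∧
      ((s ∈ Dset P ∧ m ≤ s) ∨ (s ∉ Dset P ∧ s ≤ m)) := by
  rintro s ⟨hsJ, hsI⟩
  by_cases hsD : s ∈ Dset P
  · -- take the minimum of {z ∈ J \ I | z ≤ s}
    obtain ⟨m, hmQ, hms, hmin⟩ := exists_min_of_mem
      (Q := {z | z ∈ J \ I ∧ z ≤ s}) (x := s) ⟨⟨hsJ, hsI⟩, le_refl s⟩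
    have hmD : m ∈ Dset P := Dset_lower hms hsD
    have hmmin : m ∈ minSet Iᶜ := by
      refine ⟨hmQ.1.2, fun z hz hzm => ?_⟩
      have hzJ : z ∈ J := hJ (hzm.trans hms) hsJ
      exact hmin z ⟨⟨hzJ, hz⟩, hzm.trans hms⟩ hzm
    have hmp : m ∈ phi I := (mem_phi_of_D hmD).2 hmmin
    have hmp' : m ∉ phi J := by
      rw [mem_phi_of_D hmD]
      rintro ⟨hmJc, -⟩
      exact hmJc hmQ.1.1
    exact ⟨m, Or.inl ⟨hmp, hmp'⟩, Or.inl ⟨hsD, hms⟩⟩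
  · -- take the maximum of {z ∈ J \ I | s ≤ z}
    obtain ⟨m, hmQ, hsm, hmax⟩ := exists_max_of_mem
      (Q := {z | z ∈ J \ I ∧ s ≤ z}) (x := s) ⟨⟨hsJ, hsI⟩, le_refl s⟩
    have hmD : m ∉ Dset P := fun h => hsD (Dset_lower hsm h)
    have hmmax : m ∈ maxSet J := by
      refine ⟨hmQ.1.1, fun z hz hmz => ?_⟩
      by_cases hzI : z ∈ I
      · exact absurd (hI hmz hzI) hmQ.1.2
      · exact hmax z ⟨⟨hz, hzI⟩, hsm.trans hmz⟩ hmz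
    have hmp : m ∈ phi J := (mem_phi_of_nD hmD).2 hmmax
    have hmp' : m ∉ phi I := by
      rw [mem_phi_of_nD hmD]
      rintro ⟨hmI, -⟩
      exact hmQ.1.2 hmI
    exact ⟨m, Or.inr ⟨hmp, hmp'⟩, Or.inr ⟨hsD, hsm⟩⟩

lemma anchor1 {I J : Set P} (hI : IsLowerSet I) (hJ : IsLowerSet J) (hIJ : I ⊆ J) :
    ∀ t ∈ phi I \ phi J ∪ phi J \ phi I, ∃ u, u ∈ J \ I ∧
      u ∈ phi I \ phi J ∪ phi J \ phi I ∧ (t ≤ u ∨ u ≤ t) := by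
  rintro t (⟨htI, htJ⟩ | ⟨htJ, htI⟩)
  · -- t ∈ phi I \ phi J
    by_cases htD : t ∈ Dset P
    · -- t ∈ minSet Iᶜ ∩ D; show t ∈ J \ I
      have htm := (mem_phi_of_D htD).1 htI
      have htJ' : t ∈ J := by
        by_contra htJ'
        refine htJ ((mem_phi_of_D htD).2 ⟨htJ', fun z hz hzt => ?_⟩)
        exact htm.2 z (fun hzI => hz (hIJ hzI)) hzt
      exact ⟨t, ⟨htJ', htm.1⟩, Or.inl ⟨htI, htJ⟩, Or.inl (le_refl t)⟩
    · -- t ∈ maxSet I \ D, t not maximal in J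
      have htm := (mem_phi_of_nD htD).1 htI
      have htnm : t ∉ maxSet J := fun h => htJ ((mem_phi_of_nD htD).2 h)
      simp only [maxSet, Set.mem_setOf_eq, not_and, not_forall] at htnm
      obtain ⟨y, hyJ, hty, htyne⟩ := htnm (hIJ htm.1)
      have hyI : y ∉ I := fun hyI => htyne (htm.2 y hyI hty)
      obtain ⟨m, hmQ, hym, hmax⟩ := exists_max_of_mem
        (Q := {z | z ∈ J \ I ∧ t ≤ z}) (x := y) ⟨⟨hyJ, hyI⟩, hty⟩
      have hmD : m ∉ Dset P := fun h => htD (Dset_lower hmQ.2 h)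
      have hmmax : m ∈ maxSet J := by
        refine ⟨hmQ.1.1, fun z hz hmz => ?_⟩
        by_cases hzI : z ∈ I
        · exact absurd (hI hmz hzI) hmQ.1.2
        · exact hmax z ⟨⟨hz, hzI⟩, hmQ.2.trans hmz⟩ hmz
      have hmp : m ∈ phi J := (mem_phi_of_nD hmD).2 hmmax
      have hmp' : m ∉ phi I := by
        rw [mem_phi_of_nD hmD]
        rintro ⟨hmI, -⟩
        exact hmQ.1.2 hmI
      exact ⟨m, hmQ.1, Or.inr ⟨hmp, hmp'⟩, Or.inl hmQ.2⟩
  · -- t ∈ phi J \ phi I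
    by_cases htD : t ∈ Dset P
    · -- t ∈ minSet Jᶜ ∩ D, not minimal in Iᶜ
      have htm := (mem_phi_of_D htD).1 htJ
      have htnm : t ∉ minSet Iᶜ := fun h => htI ((mem_phi_of_D htD).2 h)
      simp only [minSet, Set.mem_setOf_eq, not_and, not_forall] at htnm
      have htIc : t ∈ Iᶜ := fun htI' => htm.1 (hIJ htI')
      obtain ⟨y, hyIc, hyt, hytne⟩ := htnm htIc
      have hyJ : y ∈ J := by
        by_contra hyJ'
        exact hytne (htm.2 y hyJ' hyt)
      obtain ⟨m, hmQ, hmy, hmin⟩ := exists_min_of_mem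
        (Q := {z | z ∈ J \ I ∧ z ≤ t}) (x := y) ⟨⟨hyJ, hyIc⟩, hyt⟩
      have hmD : m ∈ Dset P := Dset_lower hmQ.2 htD
      have hmmin : m ∈ minSet Iᶜ := by
        refine ⟨hmQ.1.2, fun z hz hzm => ?_⟩
        by_cases hzJ : z ∈ J
        · exact hmin z ⟨⟨hzJ, hz⟩, hzm.trans hmQ.2⟩ hzm
        · -- z ∉ J : z ≤ m ≤ t and t minimal in Jᶜ force z = t, m = t, absurd
          have hzt := htm.2 z hzJ (hzm.trans hmQ.2)
          have hmt : m = t := le_antisymm hmQ.2 (hzt ▸ hzm)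
          exact absurd (hmt ▸ hmQ.1.1) htm.1
      have hmp : m ∈ phi I := (mem_phi_of_D hmD).2 hmmin
      have hmp' : m ∉ phi J := by
        rw [mem_phi_of_D hmD]
        rintro ⟨hmJc, -⟩
        exact hmJc hmQ.1.1
      exact ⟨m, hmQ.1, Or.inl ⟨hmp, hmp'⟩, Or.inr hmQ.2⟩
    · -- t ∈ maxSet J \ D : then t ∈ J \ I
      have htm := (mem_phi_of_nD htD).1 htJ
      have htI' : t ∉ I := by
        intro htI'
        exact htI ((mem_phi_of_nD htD).2 ⟨htI', fun y hyI hty => htm.2 y (hIJ hyI) hty⟩)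
      exact ⟨t, ⟨htm.1, htI'⟩, Or.inr ⟨htJ, htI⟩, Or.inl (le_refl t)⟩

lemma dir1 (hX : ¬ ContainsX P) {I J : Set P} (hI : IsLowerSet I) (hJ : IsLowerSet J)
    (hIJ : I ⊆ J) (hS : ConnIn (J \ I)) :
    ConnIn (phi I \ phi J ∪ phi J \ phi I) := by
  set T : Set P := phi I \ phi J ∪ phi J \ phi I with hTdef
  intro x hx y hy
  obtain ⟨ux, huxS, huxT, huxc⟩ := anchor1 hI hJ hIJ x hx
  obtain ⟨uy, huyS, huyT, huyc⟩ := anchor1 hI hJ hIJ y hy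
  obtain ⟨mx, hmxT, hmxc⟩ := rho'_ex hI hJ hIJ ux huxS
  obtain ⟨my, hmyT, hmyc⟩ := rho'_ex hI hJ hIJ uy huyS
  have hpath := hS ux huxS uy huyS
  have hmid := transport hX (rho'_ex hI hJ hIJ) hpath ⟨hmxT, hmxc⟩ my ⟨hmyT, hmyc⟩
  have e1 : Relation.ReflTransGen (fun u v => u ∈ T ∧ v ∈ T ∧ (u ≤ v ∨ v ≤ u)) x ux :=
    Relation.ReflTransGen.single ⟨hx, huxT, huxc⟩
  have e2 : Relation.ReflTransGen (fun u v => u ∈ T ∧ v ∈ T ∧ (u ≤ v ∨ v ≤ u)) ux mx := by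
    refine Relation.ReflTransGen.single ⟨huxT, hmxT, ?_⟩
    rcases hmxc with ⟨_, h⟩ | ⟨_, h⟩
    · exact Or.inr h
    · exact Or.inl h
  have e3 : Relation.ReflTransGen (fun u v => u ∈ T ∧ v ∈ T ∧ (u ≤ v ∨ v ≤ u)) my uy := by
    refine Relation.ReflTransGen.single ⟨hmyT, huyT, ?_⟩
    rcases hmyc with ⟨_, h⟩ | ⟨_, h⟩
    · exact Or.inl h
    · exact Or.inr h
  have e4 : Relation.ReflTransGen (fun u v => u ∈ T ∧ v ∈ T ∧ (u ≤ v ∨ v ≤ u)) uy y :=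
    Relation.ReflTransGen.single ⟨huyT, hy, huyc.symm⟩
  exact ((e1.trans e2).trans hmid).trans (e3.trans e4)

omit [Fintype P] in
lemma order_adj_iff {I J : {I : Set P // IsLowerSet I}} :
    (orderSkeleton P).Adj I J ↔ I.1 ≠ J.1 ∧ ConnIn (I.1 \ J.1 ∪ J.1 \ I.1) := by
  rw [orderSkeleton, SimpleGraph.fromRel_adj]
  constructor
  · rintro ⟨hne, h | h⟩
    · refine ⟨fun he => hne (Subtype.ext he), ?_⟩
      rw [Set.diff_eq_empty.2 h.1.1, Set.empty_union]
      exact h.2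
    · refine ⟨fun he => hne (Subtype.ext he), ?_⟩
      rw [Set.diff_eq_empty.2 h.1.1, Set.union_empty]
      exact h.2
  · rintro ⟨hne, hconn⟩
    refine ⟨fun he => hne (congrArg Subtype.val he), ?_⟩
    rcases crossing I.2 J.2 hconn with hsub | hsub
    · left
      refine ⟨Set.ssubset_iff_subset_ne.2 ⟨hsub, hne⟩, ?_⟩
      rwa [Set.diff_eq_empty.2 hsub, Set.empty_union] at hconn
    · right
      refine ⟨Set.ssubset_iff_subset_ne.2 ⟨hsub, hne.symm⟩, ?_⟩
      rwa [Set.diff_eq_empty.2 hsub, Set.union_empty] at hconn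

omit [Fintype P] in
lemma chain_adj_iff {A B : {A : Set P // IsAntichain (· ≤ ·) A}} :
    (chainSkeleton P).Adj A B ↔ A.1 ≠ B.1 ∧ ConnIn (A.1 \ B.1 ∪ B.1 \ A.1) := by
  rw [chainSkeleton, SimpleGraph.fromRel_adj]
  constructor
  · rintro ⟨hne, h | h⟩
    · exact ⟨fun he => hne (Subtype.ext he), h⟩
    · refine ⟨fun he => hne (Subtype.ext he), ?_⟩
      rwa [Set.union_comm]
  · rintro ⟨hne, hconn⟩
    exact ⟨fun he => hne (congrArg Subtype.val he), Or.inl hconn⟩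

variable (P) in
noncomputable def isoFun : {I : Set P // IsLowerSet I} ≃ {A : Set P // IsAntichain (· ≤ ·) A} where
  toFun I := ⟨phi I.1, antichain_phi I.2 I.2⟩
  invFun A := ⟨psi A.1, lower_psi A.2⟩
  left_inv I := Subtype.ext (psi_phi I.2)
  right_inv A := Subtype.ext (phi_psi A.2)

lemma iso_adj (hX : ¬ ContainsX P) (I J : {I : Set P // IsLowerSet I}) :
    (orderSkeleton P).Adj I J ↔ (chainSkeleton P).Adj (isoFun P I) (isoFun P J) := by
  rw [order_adj_iff, chain_adj_iff]
  show _ ↔ phi I.1 ≠ phi J.1 ∧ ConnIn (phi I.1 \ phi J.1 ∪ phi J.1 \ phi I.1)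
  constructor
  · rintro ⟨hne, hconn⟩
    have hinj : phi I.1 ≠ phi J.1 := fun h => hne (by rw [← psi_phi I.2, ← psi_phi J.2, h])
    refine ⟨hinj, ?_⟩
    rcases crossing I.2 J.2 hconn with hsub | hsub
    · exact dir1 hX I.2 J.2 hsub (by rwa [Set.diff_eq_empty.2 hsub, Set.empty_union] at hconn)
    · have := dir1 hX J.2 I.2 hsub (by rwa [Set.diff_eq_empty.2 hsub, Set.union_empty] at hconn)
      rwa [Set.union_comm] at this
  · rintro ⟨hne, hconn⟩
    have hne' : I.1 ≠ J.1 := fun h => hne (by rw [h])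
    have hc := dir2 hX (antichain_phi I.2 I.2) (antichain_phi J.2 J.2) hconn
    rw [psi_phi I.2, psi_phi J.2] at hc
    exact ⟨hne', hc⟩

lemma main (hX : ¬ ContainsX P) :
    degMultiset (orderSkeleton P) = degMultiset (chainSkeleton P) := by
  have key : ∀ v, ((orderSkeleton P).neighborSet v).ncard
      = ((chainSkeleton P).neighborSet (isoFun P v)).ncard := by
    intro v
    have himg : (chainSkeleton P).neighborSet (isoFun P v)
        = (isoFun P) '' ((orderSkeleton P).neighborSet v) := by
      ext w
      simp only [SimpleGraph.mem_neighborSet, Set.mem_image]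
      constructor
      · intro hadj
        refine ⟨(isoFun P).symm w, ?_, (isoFun P).apply_symm_apply w⟩
        rw [iso_adj hX, (isoFun P).apply_symm_apply]
        exact hadj
      · rintro ⟨u, hu, rfl⟩
        exact (iso_adj hX v u).1 hu
    rw [himg, Set.ncard_image_of_injective _ (isoFun P).injective]
  have h1 : (Finset.univ.map (isoFun P).toEmbedding) = Finset.univ :=
    Finset.map_univ_equiv (isoFun P)
  unfold degMultiset
  rw [Multiset.map_congr rfl (fun v _ => key v)]
  have h2 : (Finset.univ.val.map fun v =>
        ((chainSkeleton P).neighborSet (isoFun P v)).ncard)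
      = (Finset.univ.val.map (isoFun P)).map
        (fun A => ((chainSkeleton P).neighborSet A).ncard) := by
    rw [Multiset.map_map]
    rfl
  have h3 : Multiset.map (⇑(isoFun P)) Finset.univ.val = Finset.univ.val := by
    rw [← Equiv.coe_toEmbedding, ← Finset.map_val, h1]
  rw [h2, h3]

end HLwork

theorem stmt18 {P : Type*} [Fintype P] [PartialOrder P] (h : ¬ ContainsX P) :
    degMultiset (orderSkeleton P) = degMultiset (chainSkeleton P) := by
  exact HLwork.main h
end
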